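/- For the chessboard matrix A^ξ : ℕ×ℕ → 𝔻 with A^ξ(n,k) = 1 if n+k is even and ξ otherwise (0 ≤ ξ ≤ 1), the noise numbers satisfy s^ξ_{2k+1}(l) = (π^(l−2)/3^(l/2−1))(π²/3 − β_{2k} − ξ^l α_{2k+1} − ξ^l π²/8 − π²/24) and s^ξ_{2k}(l) = (π^(l−2)/3^(l/2−1))(π²/3 − β_{2k} − ξ^l α_{2k−1} − ξ^l π²/8 − π²/24), where β_{2k} = Σ_{m=1}^k 1/(2m)² and α_{2k+1} = Σ_{m=0}^k 1/(2m+1)². -/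

import Mathlib

open Real

/-- The chessboard matrix `A^ξ : ℕ×ℕ → 𝔻`. -/
noncomputable def chessA (ξ : ℝ) (n k : ℕ) : ℂ :=
  if Even (n + k) then 1 else (ξ : ℂ)

/-- The noise number `s_n^A(l)` of a matrix `A : ℕ×ℕ → 𝔻`. -/
noncomputable def sN (A : ℕ → ℕ → ℂ) (n l : ℕ) : ℝ :=
  (π / Real.sqrt 3) ^ l *
    (1 - 3 / π ^ 2 *
      ∑' k : ℕ, (if k = n then (0:ℝ) else ‖A n k‖ ^ l / ((k : ℝ) - n) ^ 2))

/-- `β_{2k} = ∑_{m=1}^k 1/(2m)²`. -/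
noncomputable def βe (k : ℕ) : ℝ := ∑ m ∈ Finset.Icc 1 k, 1 / ((2 * m : ℝ)) ^ 2

/-- `α_{2k+1} = ∑_{m=0}^k 1/(2m+1)²`. -/
noncomputable def αo (k : ℕ) : ℝ := ∑ m ∈ Finset.range (k + 1), 1 / ((2 * m + 1 : ℝ)) ^ 2

/- ### auxiliary material -/

noncomputable def gg (c : ℝ) (j : ℕ) : ℝ :=
  if j = 0 then 0 else (if Even j then 1 else c) / (j : ℝ) ^ 2

lemma gg_even (c : ℝ) (m : ℕ) : gg c (2 * m) = 1 / ((2 * m : ℕ) : ℝ) ^ 2 := by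
  rcases Nat.eq_zero_or_pos m with h | h
  · simp [gg, h]
  · have : 2 * m ≠ 0 := by omega
    simp [gg, this, even_two_mul]

lemma gg_odd (c : ℝ) (m : ℕ) : gg c (2 * m + 1) = c / ((2 * m + 1 : ℕ) : ℝ) ^ 2 := by
  have h1 : ¬ Even (2 * m + 1) := by simp [Nat.even_add_one, even_two_mul]
  simp [gg, h1]

lemma hasSum_even_part : HasSum (fun m : ℕ => (1 : ℝ) / ((2 * m : ℕ) : ℝ) ^ 2) (π ^ 2 / 24) := by
  have h := hasSum_zeta_two.mul_left (1 / 4 : ℝ)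
  have heq : (fun m : ℕ => (1 / 4 : ℝ) * (1 / (m : ℝ) ^ 2)) =
      fun m : ℕ => (1 : ℝ) / ((2 * m : ℕ) : ℝ) ^ 2 := by
    funext m
    push_cast
    ring
  rw [heq] at h
  have hv : (1 / 4 : ℝ) * (π ^ 2 / 6) = π ^ 2 / 24 := by ring
  rwa [hv] at h

lemma summable_odd_part : Summable (fun m : ℕ => (1 : ℝ) / ((2 * m + 1 : ℕ) : ℝ) ^ 2) := by
  have hs : Summable (fun m : ℕ => (1 : ℝ) / ((m : ℝ) + 1) ^ 2) := by
    have := hasSum_zeta_two.summable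
    rw [← summable_nat_add_iff 1] at this
    simpa using this
  refine Summable.of_nonneg_of_le (fun m => by positivity) (fun m => ?_) hs
  have h1 : (0 : ℝ) < ((m : ℝ) + 1) ^ 2 := by positivity
  apply one_div_le_one_div_of_le h1
  have : (0 : ℝ) ≤ (m : ℝ) := Nat.cast_nonneg m
  push_cast
  nlinarith

lemma hasSum_odd_part : HasSum (fun m : ℕ => (1 : ℝ) / ((2 * m + 1 : ℕ) : ℝ) ^ 2) (π ^ 2 / 8) := by
  have ho := summable_odd_part.hasSum
  set S := ∑' m : ℕ, (1 : ℝ) / ((2 * m + 1 : ℕ) : ℝ) ^ 2 with hS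
  have htot : HasSum (fun n : ℕ => (1 : ℝ) / (n : ℝ) ^ 2) (π ^ 2 / 24 + S) := by
    refine HasSum.even_add_odd ?_ ?_
    · exact hasSum_even_part
    · exact ho
  have : π ^ 2 / 6 = π ^ 2 / 24 + S := hasSum_zeta_two.unique htot
  have hSval : S = π ^ 2 / 8 := by linarith
  rwa [hSval] at ho

lemma hasSum_gg (c : ℝ) : HasSum (gg c) (π ^ 2 / 24 + c * (π ^ 2 / 8)) := by
  refine HasSum.even_add_odd ?_ ?_
  · have := hasSum_even_part
    simpa [gg_even] using this
  · have := hasSum_odd_part.mul_left c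
    have heq : (fun m : ℕ => c * ((1 : ℝ) / ((2 * m + 1 : ℕ) : ℝ) ^ 2)) =
        fun m : ℕ => gg c (2 * m + 1) := by
      funext m; rw [gg_odd]; ring
    rwa [heq] at this

lemma chess_shift (ξ : ℝ) (hξ0 : 0 ≤ ξ) (n l : ℕ) (i : ℕ) :
    (if i + n = n then (0:ℝ) else ‖chessA ξ n (i + n)‖ ^ l / (((i + n : ℕ) : ℝ) - n) ^ 2)
      = gg (ξ ^ l) i := by
  rcases Nat.eq_zero_or_pos i with h | h
  · simp [h, gg]
  · have h1 : i + n ≠ n := by omega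
    have h2 : Even (n + (i + n)) ↔ Even i := by
      have he : n + (i + n) = i + 2 * n := by ring
      rw [he, Nat.even_add]
      simp [Nat.even_mul]
    have h3 : (((i + n : ℕ) : ℝ) - n) ^ 2 = (i : ℝ) ^ 2 := by push_cast; ring
    rw [if_neg h1, h3]
    unfold chessA gg
    rw [if_neg (by omega : i ≠ 0)]
    by_cases he : Even i
    · rw [if_pos (h2.mpr he), if_pos he]
      simp
    · rw [if_neg (fun hh => he (h2.mp hh)), if_neg he]
      rw [Complex.norm_real, Real.norm_eq_abs, abs_of_nonneg hξ0]

lemma chess_head (ξ : ℝ) (hξ0 : 0 ≤ ξ) (n l : ℕ) (i : ℕ) (hi : i < n) :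
    (if i = n then (0:ℝ) else ‖chessA ξ n i‖ ^ l / ((i : ℝ) - n) ^ 2)
      = gg (ξ ^ l) (n - i) := by
  have h1 : i ≠ n := by omega
  have h3 : ((i : ℝ) - n) ^ 2 = ((n - i : ℕ) : ℝ) ^ 2 := by
    rw [Nat.cast_sub (le_of_lt hi)]; ring
  have h2 : Even (n + i) ↔ Even (n - i) := by
    rw [Nat.even_add, Nat.even_sub (le_of_lt hi)]
  rw [if_neg h1, h3]
  unfold chessA gg
  rw [if_neg (by omega : n - i ≠ 0)]
  by_cases he : Even (n + i)
  · rw [if_pos he, if_pos (h2.mp he)]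
    simp
  · rw [if_neg he, if_neg (fun hh => he (h2.mpr hh))]
    rw [Complex.norm_real, Real.norm_eq_abs, abs_of_nonneg hξ0]

lemma tsum_chess (ξ : ℝ) (hξ0 : 0 ≤ ξ) (n l : ℕ) :
    ∑' k : ℕ, (if k = n then (0:ℝ) else ‖chessA ξ n k‖ ^ l / ((k : ℝ) - n) ^ 2)
      = ∑ j ∈ Finset.range n, gg (ξ ^ l) (j + 1) + (π ^ 2 / 24 + ξ ^ l * (π ^ 2 / 8)) := by
  set F : ℕ → ℝ := fun k =>
    if k = n then (0:ℝ) else ‖chessA ξ n k‖ ^ l / ((k : ℝ) - n) ^ 2 with hF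
  have hshift : (fun i => F (i + n)) = gg (ξ ^ l) := by
    funext i; exact chess_shift ξ hξ0 n l i
  have hsum : Summable F := by
    rw [← summable_nat_add_iff n, hshift]
    exact (hasSum_gg (ξ ^ l)).summable
  have := (Summable.sum_add_tsum_nat_add n hsum).symm
  rw [this, hshift, (hasSum_gg (ξ ^ l)).tsum_eq]
  congr 1
  have hhead : ∀ i ∈ Finset.range n, F i = gg (ξ ^ l) (n - i) := by
    intro i hi
    exact chess_head ξ hξ0 n l i (Finset.mem_range.mp hi)
  rw [Finset.sum_congr rfl hhead]
  rw [← Finset.sum_range_reflect (fun j => gg (ξ ^ l) (j + 1)) n]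
  apply Finset.sum_congr rfl
  intro i hi
  have : n - 1 - i + 1 = n - i := by
    have := Finset.mem_range.mp hi; omega
  rw [this]

lemma head_even (c : ℝ) (k : ℕ) :
    ∑ j ∈ Finset.range (2 * k), gg c (j + 1) =
      βe k + c * ∑ m ∈ Finset.range k, 1 / ((2 * m + 1 : ℝ)) ^ 2 := by
  induction k with
  | zero => simp [βe]
  | succ k ih =>
    have h1 : 2 * (k + 1) = (2 * k + 1) + 1 := by ring
    rw [h1, Finset.sum_range_succ, Finset.sum_range_succ, ih]
    have h2 : gg c (2 * k + 1) = c / ((2 * k + 1 : ℕ) : ℝ) ^ 2 := gg_odd c k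
    have h3 : gg c (2 * k + 1 + 1) = 1 / ((2 * (k + 1) : ℕ) : ℝ) ^ 2 := by
      have : 2 * k + 1 + 1 = 2 * (k + 1) := by ring
      rw [this, gg_even]
    rw [h2, h3]
    have h4 : βe (k + 1) = βe k + 1 / ((2 * (k + 1) : ℝ)) ^ 2 := by
      unfold βe
      rw [Finset.sum_Icc_succ_top (by omega : 1 ≤ k + 1)]
      push_cast; ring
    rw [h4, Finset.sum_range_succ]
    push_cast
    ring

lemma head_odd (c : ℝ) (k : ℕ) :
    ∑ j ∈ Finset.range (2 * k + 1), gg c (j + 1) = βe k + c * αo k := by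
  rw [Finset.sum_range_succ, head_even]
  have h2 : gg c (2 * k + 1) = c / ((2 * k + 1 : ℕ) : ℝ) ^ 2 := gg_odd c k
  rw [h2]
  unfold αo
  rw [Finset.sum_range_succ]
  push_cast
  ring

lemma prefac (l : ℕ) :
    (π / Real.sqrt 3) ^ l =
      π ^ ((l : ℝ) - 2) / 3 ^ ((l : ℝ) / 2 - 1) * (π ^ 2 / 3) := by
  have h3 : (0:ℝ) < 3 := by norm_num
  have hπ : (0:ℝ) < π := pi_pos
  have hl3 : (0:ℝ) < (3:ℝ) ^ ((l:ℝ)/2) := Real.rpow_pos_of_pos h3 _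
  have h5 : (Real.sqrt 3) ^ l = (3:ℝ) ^ ((l:ℝ)/2) := by
    rw [Real.sqrt_eq_rpow, ← Real.rpow_natCast ((3:ℝ) ^ ((1:ℝ)/2)) l,
      ← Real.rpow_mul h3.le]
    congr 1; ring
  have h6 : π ^ ((l:ℝ) - 2) = π ^ l / π ^ 2 := by
    rw [Real.rpow_sub hπ, Real.rpow_natCast,
      show ((2:ℝ)) = ((2:ℕ):ℝ) by norm_num, Real.rpow_natCast]
  have h7 : (3:ℝ) ^ ((l:ℝ)/2 - 1) = (3:ℝ) ^ ((l:ℝ)/2) / 3 := by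
    rw [Real.rpow_sub h3, Real.rpow_one]
  rw [div_pow, h5, h6, h7]
  have hπ' : π ≠ 0 := pi_ne_zero
  field_simp

/-- The noise numbers of the chessboard matrices `A^ξ` on `ℕ × ℕ`:
`s^ξ_{2k+1}(l)` and `s^ξ_{2k}(l)` are given by the explicit formulas, where
`α_{2k-1} = ∑_{m=0}^{k-1} 1/(2m+1)²`. -/
theorem stmt6 (ξ : ℝ) (hξ0 : 0 ≤ ξ) (hξ1 : ξ ≤ 1) (k l : ℕ) :
    sN (chessA ξ) (2 * k + 1) l =
      π ^ ((l : ℝ) - 2) / 3 ^ ((l : ℝ) / 2 - 1) *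
        (π ^ 2 / 3 - βe k - ξ ^ l * αo k - ξ ^ l * (π ^ 2 / 8) - π ^ 2 / 24) ∧
    sN (chessA ξ) (2 * k) l =
      π ^ ((l : ℝ) - 2) / 3 ^ ((l : ℝ) / 2 - 1) *
        (π ^ 2 / 3 - βe k -
          ξ ^ l * (∑ m ∈ Finset.range k, 1 / ((2 * m + 1 : ℝ)) ^ 2) -
          ξ ^ l * (π ^ 2 / 8) - π ^ 2 / 24) := by
  have hπ : π ≠ 0 := pi_ne_zero
  constructor
  · rw [sN, tsum_chess ξ hξ0 (2 * k + 1) l, head_odd, prefac]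
    field_simp
    ring
  · rw [sN, tsum_chess ξ hξ0 (2 * k) l, head_even, prefac]
    field_simp
    ring
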